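/- Let G be a finite group with a unique conjugacy class of involutions, H ≤ G of order 2 with nontrivial element h, W the coinduced module of the trivial 𝔽₂H-module U = {0,u}, and α ∈ Z²(G,W) the 2-cocycle defined from β (β(h,h) = u, else 0) via α(g₁,g₂)(g) = β(π(g₁g₂g)π(g₂g)⁻¹, π(g₂g)π(g)⁻¹) with π(1) = 1. Let E = G × W be the extension group with multiplication (g₁,f₁)(g₂,f₂) = (g₁g₂, f₁g₂ + f₂ + α(g₁,g₂)). Then every element of E of order 2 lies in the normal subgroup {(1,f) : f ∈ W}. -/
import Mathlib


open Classical in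
theorem stmt_15 {G : Type*} [Group G] [Fintype G]
    (huniq : ∀ a b : G, a ^ 2 = 1 → a ≠ 1 → b ^ 2 = 1 → b ≠ 1 → IsConj a b)
    (H : Subgroup G)
    (h : G) (hmem : h ∈ H) (hne : h ≠ 1) (hord : ∀ x ∈ H, x = 1 ∨ x = h)
    (Y : Set G)
    (htrans : ∀ g : G, ∃! p : Y × H, (p.1 : G) * (p.2 : G) = g)
    (π : G → H)
    (hπ : ∀ (y : Y) (h' : H), π ((y : G) * (h' : G)) = h')
    (hπ1 : π 1 = 1)
    (β : H → H → ZMod 2)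
    (hβ : ∀ a b : H, β a b = if (a : G) = h ∧ (b : G) = h then 1 else 0)
    (α : G → G → G → ZMod 2)
    (hα : ∀ g₁ g₂ g : G,
      α g₁ g₂ g = β (π (g₁ * g₂ * g) * (π (g₂ * g))⁻¹) (π (g₂ * g) * (π g)⁻¹)) :
    ∀ x : G × (G → ZMod 2),
      (∀ g : G, ∀ h' ∈ H, x.2 (g * h') = x.2 g) →
      (x.1 * x.1, (fun g => x.2 (x.1 * g)) + x.2 + α x.1 x.1) =
        ((1 : G), (0 : G → ZMod 2)) →
      x ≠ (1, 0) →
      x.1 = 1 := by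
  rintro ⟨g, f⟩ hinv heq hne'
  simp only [Prod.mk.injEq] at heq
  obtain ⟨hg2, hf⟩ := heq
  by_contra hg1
  -- h has order 2
  have hh2 : h * h = 1 := by
    rcases hord (h * h) (mul_mem hmem hmem) with h1 | h1
    · exact h1
    · exact absurd (mul_right_cancel (h1.trans (one_mul h).symm)) hne
  have hhinv : h⁻¹ = h := inv_eq_of_mul_eq_one_left hh2
  -- g is conjugate to h
  obtain ⟨c, hc⟩ := huniq g h (by rw [sq]; exact hg2) hg1 (by rw [sq]; exact hh2) hne
  -- hc : ↑c * g = h * ↑c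
  set d : G := (c : G)⁻¹ with hd
  have key : g * d = d * h := by
    have h1 : (c : G) * g = h * (c : G) := hc
    have h2 : g = (c : G)⁻¹ * h * (c : G) := by
      rw [mul_assoc, ← h1, ← mul_assoc, inv_mul_cancel, one_mul]
    rw [hd, h2]; group
  obtain ⟨⟨y, h'⟩, hyh', -⟩ := htrans d
  simp only at hyh'
  have hπd : π d = h' := by rw [← hyh']; exact hπ y h'
  have hπdh : π (d * h) = h' * ⟨h, hmem⟩ := by
    have : d * h = (y : G) * ((h' * ⟨h, hmem⟩ : H) : G) := by
      push_cast
      rw [← mul_assoc, hyh']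
    rw [this]; exact hπ y _
  rcases hord (h' : G) h'.2 with e | e
  all_goals {
    have hα1 : α g g d = 1 := by
      rw [hα, hg2, one_mul, key, hπd, hπdh, hβ, if_pos]
      constructor
      · push_cast
        rw [e]
        simp [mul_inv_rev, hhinv, hh2]
        try group
        try simp [hhinv, hh2]
        try rw [← mul_assoc, hh2, one_mul, hhinv]
      · push_cast
        rw [e]
        try simp [hh2, hhinv]
        try rw [mul_assoc, ← hhinv, mul_inv_cancel, mul_one]
    have := congrFun hf d
    simp only [Pi.add_apply, Pi.zero_apply] at this
    rw [key, show f (d * h) = f d from hinv d h hmem, hα1] at this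
    have h20 : (f d + f d : ZMod 2) = 0 := by
      generalize f d = a
      revert a; decide
    rw [h20, zero_add] at this
    exact one_ne_zero this
  }
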